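/- Let R = R(A,B,Z) be a bicolored rectangular family satisfying the standing assumptions and let K ⊆ R↓ be a nonempty corner-free intersection subfamily. Let A(K) and B(K) denote the sets of bottom-left and top-right corners, respectively, of the rectangles in K. If there is a vertical line that intersects every rectangle of K, then |K| ≤ |A(K)| + |B(K)| − 1. -/

import Mathlib

open scoped Classical

noncomputable section

abbrev Pt : Type := ℝ × ℝ
abbrev Rect : Type := Set Pt

def IsRect (R : Rect) : Prop := ∃ a b : Pt, a ≤ b ∧ R = Set.Icc a b

def Intersects (R S : Rect) : Prop := (R ∩ S).Nonempty

def IndepFamily (I : Set Rect) : Prop :=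
  ∀ R ∈ I, ∀ S ∈ I, R ≠ S → R ∩ S = ∅

def IsHittingSet (H : Set Pt) (C : Set Rect) : Prop :=
  ∀ R ∈ C, ∃ p ∈ H, p ∈ R

def mis (C : Set Rect) : ℕ :=
  sSup {n | ∃ I : Finset Rect, ↑I ⊆ C ∧ IndepFamily ↑I ∧ I.card = n}

def mhs (C : Set Rect) : ℕ :=
  sInf {n | ∃ H : Finset Pt, IsHittingSet ↑H C ∧ H.card = n}

def brf (A B : Finset Pt) (Z : Set Pt) : Set Rect :=
  {R | ∃ a ∈ A, ∃ b ∈ B, a ≤ b ∧ Set.Icc a b ⊆ Z ∧ R = Set.Icc a b}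

def Standing (A B : Finset Pt) (Z : Set Pt) : Prop :=
  (A ∩ B = ∅) ∧ (↑(A ∪ B) ⊆ Z) ∧
  (∀ p ∈ A ∪ B, ∃ i j : ℤ, 1 ≤ i ∧ i ≤ ((A ∪ B).card : ℤ) ∧ 1 ≤ j ∧ j ≤ ((A ∪ B).card : ℤ) ∧
    p = ((i : ℝ), (j : ℝ))) ∧
  (∀ p ∈ A ∪ B, ∀ q ∈ A ∪ B, p ≠ q → p.1 ≠ q.1 ∧ p.2 ≠ q.2)

def minRects (C : Set Rect) : Set Rect :=
  {R | R ∈ C ∧ ∀ S ∈ C, S ⊆ R → S = R}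

def IsRectCorner (p : Pt) (R : Rect) : Prop :=
  ∃ a b : Pt, a ≤ b ∧ R = Set.Icc a b ∧
    (p = a ∨ p = b ∨ p = (a.1, b.2) ∨ p = (b.1, a.2))

def CornerFree (R S : Rect) : Prop :=
  (∀ p, IsRectCorner p R → p ∉ interior S) ∧ (∀ p, IsRectCorner p S → p ∉ interior R)

def CFI (K : Set Rect) : Prop :=
  ∀ R ∈ K, ∀ S ∈ K, R ≠ S → CornerFree R S

def interGraph (K : Set Rect) : SimpleGraph K :=
  SimpleGraph.fromRel (fun R S => Intersects (R : Rect) (S : Rect))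

def IsComparabilityGraph {V : Type*} (G : SimpleGraph V) : Prop :=
  ∃ le : V → V → Prop, (∀ v, le v v) ∧
    (∀ u v w, le u v → le v w → le u w) ∧
    (∀ u v, le u v → le v u → u = v) ∧
    (∀ u v, G.Adj u v ↔ u ≠ v ∧ (le u v ∨ le v u))

def QSTAB (n : ℕ) (C : Finset Rect) : Set (Rect → ℝ) :=
  {x | (∀ R, 0 ≤ x R) ∧ (∀ R ∉ C, x R = 0) ∧
    ∀ i j : ℤ, 1 ≤ i → i ≤ (n : ℤ) → 1 ≤ j → j ≤ (n : ℤ) →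
      ∑ R ∈ C.filter (fun R => ((i : ℝ), (j : ℝ)) ∈ R), x R ≤ 1}

def misLP (n : ℕ) (C : Finset Rect) : ℝ :=
  sSup {s | ∃ x ∈ QSTAB n C, s = ∑ R ∈ C, x R}

def cliqueNum' {V : Type*} (G : SimpleGraph V) : ℕ :=
  sSup {n | ∃ s : Finset V, G.IsNClique n s}

def IsPerfect {V : Type*} (G : SimpleGraph V) : Prop :=
  ∀ S : Set V, (G.induce S).chromaticNumber = (cliqueNum' (G.induce S) : ℕ∞)

def rectArea (R : Rect) : ℝ :=
  (sSup (Prod.fst '' R) - sInf (Prod.fst '' R)) *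
  (sSup (Prod.snd '' R) - sInf (Prod.snd '' R))

def blCorner (R : Rect) : Pt := (sInf (Prod.fst '' R), sInf (Prod.snd '' R))
def trCorner (R : Rect) : Pt := (sSup (Prod.fst '' R), sSup (Prod.snd '' R))

lemma icc_eq_icc {a b a' b' : Pt} (h : a ≤ b) (h' : a' ≤ b')
    (he : Set.Icc a b = Set.Icc a' b') : a = a' ∧ b = b' := by
  have h1 : a' ∈ Set.Icc a b := by rw [he]; exact Set.left_mem_Icc.2 h'
  have h2 : a ∈ Set.Icc a' b' := by rw [← he]; exact Set.left_mem_Icc.2 h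
  have h3 : b' ∈ Set.Icc a b := by rw [he]; exact Set.right_mem_Icc.2 h'
  have h4 : b ∈ Set.Icc a' b' := by rw [← he]; exact Set.right_mem_Icc.2 h
  exact ⟨le_antisymm h1.1 h2.1, le_antisymm h4.2 h3.2⟩

lemma bl_icc {a b : Pt} (h : a ≤ b) : blCorner (Set.Icc a b) = a := by
  have h1 : (Set.Icc a.1 b.1).Nonempty := Set.nonempty_Icc.2 h.1
  have h2 : (Set.Icc a.2 b.2).Nonempty := Set.nonempty_Icc.2 h.2
  unfold blCorner
  rw [Set.Icc_prod_eq, Set.fst_image_prod _ h2, Set.snd_image_prod h1,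
    csInf_Icc h.1, csInf_Icc h.2]

lemma tr_icc {a b : Pt} (h : a ≤ b) : trCorner (Set.Icc a b) = b := by
  have h1 : (Set.Icc a.1 b.1).Nonempty := Set.nonempty_Icc.2 h.1
  have h2 : (Set.Icc a.2 b.2).Nonempty := Set.nonempty_Icc.2 h.2
  unfold trCorner
  rw [Set.Icc_prod_eq, Set.fst_image_prod _ h2, Set.snd_image_prod h1,
    csSup_Icc h.1, csSup_Icc h.2]

lemma mem_interior_icc {a b p : Pt} :
    p ∈ interior (Set.Icc a b) ↔ (a.1 < p.1 ∧ p.1 < b.1) ∧ (a.2 < p.2 ∧ p.2 < b.2) := by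
  rw [Set.Icc_prod_eq, interior_prod_eq, interior_Icc, interior_Icc]
  exact Set.mem_prod

section Aux

variable {A B : Finset Pt} {Z : Set Pt}

/-- points of `A` and of `B` are distinct. -/
lemma ab_ne (hst : Standing A B Z) {a b : Pt} (ha : a ∈ A) (hb : b ∈ B) : a ≠ b := by
  intro h
  have : a ∈ A ∩ B := Finset.mem_inter.2 ⟨ha, h ▸ hb⟩
  rw [hst.1] at this
  exact Finset.notMem_empty _ this

lemma coord_ne (hst : Standing A B Z) {p q : Pt} (hp : p ∈ A ∪ B) (hq : q ∈ A ∪ B)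
    (h : p ≠ q) : p.1 ≠ q.1 ∧ p.2 ≠ q.2 := hst.2.2.2 p hp q hq h

/-- Key lemma: two rectangles of `K` cannot have partially overlapping y-intervals. -/
lemma no_partial_overlap (hst : Standing A B Z)
    {K : Set Rect} (hK : K ⊆ minRects (brf A B Z)) (hcfi : CFI K)
    {c : ℝ} (hline : ∀ R ∈ K, ∃ y : ℝ, ((c, y) : Pt) ∈ R)
    {a b a' b' : Pt} (ha : a ∈ A) (hb : b ∈ B) (ha' : a' ∈ A) (hb' : b' ∈ B)
    (hab : a ≤ b) (hab' : a' ≤ b')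
    (hR : Set.Icc a b ∈ K) (hS : Set.Icc a' b' ∈ K)
    (h1 : a.2 < a'.2) (h2 : a'.2 < b.2) (h3 : b.2 < b'.2) : False := by
  have haa' : a ≠ a' := fun h => absurd (congrArg Prod.snd h) (ne_of_lt h1)
  have hRS : Set.Icc a b ≠ Set.Icc a' b' := fun h => haa' (icc_eq_icc hab hab' h).1
  have hcf : CornerFree (Set.Icc a b) (Set.Icc a' b') := hcfi _ hR _ hS hRS
  obtain ⟨y, hy⟩ := hline _ hR
  obtain ⟨y', hy'⟩ := hline _ hS
  rw [Set.mem_Icc] at hy hy'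
  have hac : a.1 ≤ c := hy.1.1
  have hcb : c ≤ b.1 := hy.2.1
  have hac' : a'.1 ≤ c := hy'.1.1
  have hcb' : c ≤ b'.1 := hy'.2.1
  have ha'ne : a'.1 ≠ a.1 := (coord_ne hst (Finset.mem_union_left _ ha')
    (Finset.mem_union_left _ ha) haa'.symm).1
  rcases lt_or_gt_of_ne ha'ne with hlt | hgt
  · -- a'.1 < a.1 : corner (a.1, b.2) of R lies in interior of S
    have hab'ne : a.1 ≠ b'.1 := (coord_ne hst (Finset.mem_union_left _ ha)
      (Finset.mem_union_right _ hb') (ab_ne hst ha hb')).1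
    have hcor : IsRectCorner ((a.1, b.2) : Pt) (Set.Icc a b) :=
      ⟨a, b, hab, rfl, Or.inr (Or.inr (Or.inl rfl))⟩
    exact hcf.1 _ hcor (mem_interior_icc.2
      ⟨⟨hlt, lt_of_le_of_ne (le_trans hac hcb') hab'ne⟩, ⟨h2, h3⟩⟩)
  · -- a.1 < a'.1 : corner a' of S lies in interior of R
    have ha'bne : a'.1 ≠ b.1 := (coord_ne hst (Finset.mem_union_left _ ha')
      (Finset.mem_union_right _ hb) (ab_ne hst ha' hb)).1
    have hcor : IsRectCorner a' (Set.Icc a' b') := ⟨a', b', hab', rfl, Or.inl rfl⟩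
    exact hcf.2 _ hcor (mem_interior_icc.2
      ⟨⟨hgt, lt_of_le_of_ne (le_trans hac' hcb) ha'bne⟩, ⟨h1, h2⟩⟩)

/-- Existence of a rectangle one of whose corners is private. -/
lemma exists_private (hst : Standing A B Z)
    {K : Set Rect} (hK : K ⊆ minRects (brf A B Z)) (hne : K.Nonempty) (hcfi : CFI K)
    {c : ℝ} (hline : ∀ R ∈ K, ∃ y : ℝ, ((c, y) : Pt) ∈ R) (hfin : K.Finite) :
    ∃ R ∈ K, (∀ S ∈ K, S ≠ R → blCorner S ≠ blCorner R) ∨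
      (∀ S ∈ K, S ≠ R → trCorner S ≠ trCorner R) := by
  obtain ⟨R, hR, hmin⟩ := Set.exists_min_image K
    (fun R => (trCorner R).2 - (blCorner R).2) hfin hne
  refine ⟨R, hR, ?_⟩
  by_contra hcon
  push_neg at hcon
  obtain ⟨⟨S, hS, hSR, hblS⟩, T, hT, hTR, htrT⟩ := hcon
  obtain ⟨⟨a, ha, b, hb, hab, _, hRe⟩, _⟩ := hK hR
  obtain ⟨⟨a2, ha2, b2, hb2, hab2, _, hSe⟩, _⟩ := hK hS
  obtain ⟨⟨a3, ha3, b3, hb3, hab3, _, hTe⟩, _⟩ := hK hT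
  subst hRe hSe hTe
  rw [bl_icc hab2, bl_icc hab] at hblS
  rw [tr_icc hab3, tr_icc hab] at htrT
  subst hblS htrT
  -- S = Icc a2 b2 with b2 ≠ b3 ; T = Icc a3 b3 with a3 ≠ a2
  have hb2b : b2 ≠ b3 := fun h => hSR (by rw [h])
  have ha3a : a3 ≠ a2 := fun h => hTR (by rw [h])
  have hb2bne : b2.2 ≠ b3.2 := (coord_ne hst (Finset.mem_union_right _ hb2)
    (Finset.mem_union_right _ hb) hb2b).2
  have ha3ane : a3.2 ≠ a2.2 := (coord_ne hst (Finset.mem_union_left _ ha3)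
    (Finset.mem_union_left _ ha) ha3a).2
  have habne : a2 ≠ b3 := ab_ne hst ha hb
  have hab2' : a2.2 < b3.2 := lt_of_le_of_ne hab.2
    (coord_ne hst (Finset.mem_union_left _ ha) (Finset.mem_union_right _ hb) habne).2
  -- minimality of height of R
  have hminS := hmin _ hS
  have hminT := hmin _ hT
  rw [bl_icc hab, tr_icc hab, bl_icc hab2, tr_icc hab2] at hminS
  rw [bl_icc hab, tr_icc hab, bl_icc hab3, tr_icc hab3] at hminT
  have hbb2 : b3.2 < b2.2 := by
    rcases lt_or_gt_of_ne hb2bne with h | h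
    · linarith
    · linarith
  have haa3 : a3.2 < a2.2 := by
    rcases lt_or_gt_of_ne ha3ane with h | h
    · exact h
    · linarith
  exact no_partial_overlap hst hK hcfi hline ha3 hb ha hb2 hab3 hab2 hT hS haa3 hab2' hbb2

lemma K_finite {K : Set Rect} (hK : K ⊆ minRects (brf A B Z)) : K.Finite := by
  apply Set.Finite.subset ((A.finite_toSet.prod B.finite_toSet).image
    (fun p : Pt × Pt => Set.Icc p.1 p.2))
  intro R hR
  obtain ⟨⟨a, ha, b, hb, _, _, hRe⟩, _⟩ := hK hR
  exact ⟨(a, b), ⟨ha, hb⟩, hRe.symm⟩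

lemma main_aux (hst : Standing A B Z) (c : ℝ) :
    ∀ n (K : Set Rect), K ⊆ minRects (brf A B Z) → K.Nonempty → CFI K →
      (∀ R ∈ K, ∃ y : ℝ, ((c, y) : Pt) ∈ R) → K.ncard = n →
      K.ncard ≤ (blCorner '' K).ncard + (trCorner '' K).ncard - 1 := by
  intro n
  induction n using Nat.strong_induction_on with
  | _ n ih =>
    intro K hK hne hcfi hline hn
    have hfin : K.Finite := K_finite hK
    rcases Nat.lt_or_ge n 2 with hn2 | hn2
    · -- n ≤ 1 : K is a singleton
      have hpos : 0 < K.ncard := (Set.ncard_pos hfin).2 hne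
      have hn1 : K.ncard = 1 := by omega
      obtain ⟨R, hRe⟩ := Set.ncard_eq_one.1 hn1
      subst hRe
      simp [Set.ncard_singleton]
    · -- n ≥ 2
      obtain ⟨R, hR, hpriv⟩ := exists_private hst hK hne hcfi hline hfin
      set K' : Set Rect := K \ {R} with hK'def
      have hK'sub : K' ⊆ K := Set.diff_subset
      have hK'card : K'.ncard = n - 1 := by
        rw [Set.ncard_diff_singleton_of_mem hR, hn]
      have hK'ne : K'.Nonempty := by
        apply Set.nonempty_of_ncard_ne_zero
        omega
      have hK'fin : K'.Finite := hfin.subset hK'sub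
      have hbound := ih (n - 1) (by omega) K' (fun S hS => hK (hK'sub hS)) hK'ne
        (fun S hS T hT hST => hcfi S (hK'sub hS) T (hK'sub hT) hST)
        (fun S hS => hline S (hK'sub hS)) hK'card
      have hKins : K = insert R K' := by
        rw [hK'def, Set.insert_diff_singleton, Set.insert_eq_self.2 hR]
      have hblfin : (blCorner '' K').Finite := hK'fin.image _
      have htrfin : (trCorner '' K').Finite := hK'fin.image _
      have hblpos : 0 < (blCorner '' K').ncard :=
        (Set.ncard_pos hblfin).2 (hK'ne.image _)
      have htrpos : 0 < (trCorner '' K').ncard :=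
        (Set.ncard_pos htrfin).2 (hK'ne.image _)
      have hblmono : (blCorner '' K').ncard ≤ (blCorner '' K).ncard :=
        Set.ncard_le_ncard (Set.image_mono hK'sub) (hfin.image _)
      have htrmono : (trCorner '' K').ncard ≤ (trCorner '' K).ncard :=
        Set.ncard_le_ncard (Set.image_mono hK'sub) (hfin.image _)
      have hKcard : K.ncard = K'.ncard + 1 := by
        rw [hn, hK'card]; omega
      rcases hpriv with hp | hp
      · have hnm : blCorner R ∉ blCorner '' K' := by
          rintro ⟨S, hS, hSe⟩
          exact hp S (hK'sub hS) hS.2 hSe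
        have : (blCorner '' K).ncard = (blCorner '' K').ncard + 1 := by
          rw [hKins, Set.image_insert_eq, Set.ncard_insert_of_notMem hnm hblfin]
        omega
      · have hnm : trCorner R ∉ trCorner '' K' := by
          rintro ⟨S, hS, hSe⟩
          exact hp S (hK'sub hS) hS.2 hSe
        have : (trCorner '' K).ncard = (trCorner '' K').ncard + 1 := by
          rw [hKins, Set.image_insert_eq, Set.ncard_insert_of_notMem hnm htrfin]
        omega

end Aux

/-- If every rectangle of a nonempty corner-free intersection subfamily
K ⊆ R↓ meets a fixed vertical line, then |K| ≤ |A(K)| + |B(K)| − 1, where A(K), B(K)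
are the sets of bottom-left and top-right corners of the rectangles of K. -/
theorem cfi_stabbed_by_line_card_bound (A B : Finset Pt) (Z : Set Pt)
    (hst : Standing A B Z) (K : Set Rect) (hK : K ⊆ minRects (brf A B Z))
    (hne : K.Nonempty) (hcfi : CFI K)
    (c : ℝ) (hline : ∀ R ∈ K, ∃ y : ℝ, ((c, y) : Pt) ∈ R) :
    K.ncard ≤ (blCorner '' K).ncard + (trCorner '' K).ncard - 1 :=
  main_aux hst c K.ncard K hK hne hcfi hline rfl
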